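/- Let n ≥ 2 be an integer, let λ₁, …, λₙ and h and S be positive real numbers. For (L₁, …, Lₙ) with Lᵢ ≥ 0 and h(L₁ + ⋯ + Lₙ) + 2(λ₁L₁² + ⋯ + λₙLₙ²) = S, define rᵢ = 2λᵢLᵢ. Then λ₁L₁² + ⋯ + λₙLₙ² attains its minimum over all such (L₁, …, Lₙ) if and only if r₁ = r₂ = ⋯ = rₙ. -/

import Mathlib

open Finset

set_option maxHeartbeats 1600000 in
/-- Corollary 4 (analytic content): with `rᵢ = 2λᵢLᵢ` (inradius of a tangential polygon or
circle in class `[λᵢ]`), on the constraint set of fixed total cylinder surface area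
`h∑Lᵢ + 2∑λᵢLᵢ² = S`, the total base area `∑ λᵢ Lᵢ²` attains its minimum at a point
iff `r₁ = r₂ = ⋯ = rₙ` at that point. -/
theorem stmt_13 (n : ℕ) (hn : 2 ≤ n) (lam : Fin n → ℝ) (hlam : ∀ i, 0 < lam i)
    (h S : ℝ) (hh : 0 < h) (hS : 0 < S)
    (Ls : Fin n → ℝ) (hLs : ∀ i, 0 ≤ Ls i)
    (hcon : h * ∑ i, Ls i + 2 * ∑ i, lam i * Ls i ^ 2 = S)
    (r : Fin n → ℝ) (hr : ∀ i, r i = 2 * lam i * Ls i) :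
    (∀ y : Fin n → ℝ, (∀ i, 0 ≤ y i) →
        h * ∑ i, y i + 2 * ∑ i, lam i * y i ^ 2 = S →
        ∑ i, lam i * Ls i ^ 2 ≤ ∑ i, lam i * y i ^ 2) ↔
      ∀ i j, r i = r j := by
  have hne : (0:ℕ) < n := by omega
  haveI : NeZero n := ⟨by omega⟩
  set W : ℝ := ∑ i, 1 / (2 * lam i) with hWdef
  have hW : 0 < W := by
    apply Finset.sum_pos
    · intro i _
      have := hlam i
      positivity
    · exact Finset.univ_nonempty
  set D : ℝ := h ^ 2 + 4 * S / W with hDdef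
  have hD0 : 0 ≤ D := by
    have h4 : 0 < 4 * S / W := div_pos (by linarith) hW
    simp only [hDdef]
    nlinarith [sq_nonneg h]
  have hDh : h ^ 2 < D := by
    have : 0 < 4 * S / W := by positivity
    simp [hDdef]; linarith
  set t : ℝ := (Real.sqrt D - h) / 2 with htdef
  have hsq : Real.sqrt D ^ 2 = D := Real.sq_sqrt hD0
  have hht : h < Real.sqrt D := by
    have := Real.sqrt_lt_sqrt (by positivity) hDh
    rwa [Real.sqrt_sq hh.le] at this
  have ht : 0 < t := by
    simp only [htdef]; linarith
  have htS : W * (t ^ 2 + h * t) = S := by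
    have h1 : t ^ 2 + h * t = (Real.sqrt D ^ 2 - h ^ 2) / 4 := by
      simp only [htdef]; ring
    rw [h1, hsq]
    have : (D - h ^ 2) / 4 = S / W := by
      simp only [hDdef]; ring
    rw [this]
    field_simp
  -- key identity
  have key : ∀ y : Fin n → ℝ,
      h * ∑ i, y i + 2 * ∑ i, lam i * y i ^ 2 = S →
      (h + 2 * t) * (t * W - ∑ i, y i)
        = ∑ i, (2 * lam i * y i - t) ^ 2 / (2 * lam i) := by
    intro y hc
    have e1 : ∀ i ∈ Finset.univ, (2 * lam i * y i - t) ^ 2 / (2 * lam i)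
        = 2 * (lam i * y i ^ 2) - 2 * t * y i + t ^ 2 * (1 / (2 * lam i)) := by
      intro i _
      have hl := (hlam i).ne'
      field_simp
      ring
    rw [Finset.sum_congr rfl e1]
    rw [Finset.sum_add_distrib, Finset.sum_sub_distrib, ← Finset.mul_sum,
      ← Finset.mul_sum, ← Finset.mul_sum]
    linear_combination htS - hc
  constructor
  · -- min → all r equal
    intro H
    -- the "equal radii" competitor
    set z : Fin n → ℝ := fun i => t * (1 / (2 * lam i)) with hzdef
    have hz0 : ∀ i, 0 ≤ z i := by
      intro i
      have := (hlam i)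
      positivity
    have hzP : ∑ i, z i = t * W := by
      simp only [hzdef, hWdef, Finset.mul_sum]
    have hzQ : ∑ i, lam i * z i ^ 2 = t ^ 2 / 2 * W := by
      rw [hWdef, Finset.mul_sum]
      apply Finset.sum_congr rfl
      intro i _
      have hl := (hlam i).ne'
      simp only [hzdef]
      field_simp
    have hzc : h * ∑ i, z i + 2 * ∑ i, lam i * z i ^ 2 = S := by
      rw [hzP, hzQ]
      linear_combination htS
    have hQ := H z hz0 hzc
    -- from the two constraints and hQ : ∑ Ls ≥ t*W
    have hP : t * W ≤ ∑ i, Ls i := by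
      rw [hzQ] at hQ
      rw [hzP, hzQ] at hzc
      nlinarith [hcon, hzc, hQ]
    have hkey := key Ls hcon
    have hnn : 0 ≤ ∑ i, (2 * lam i * Ls i - t) ^ 2 / (2 * lam i) := by
      apply Finset.sum_nonneg
      intro i _
      have := hlam i
      positivity
    have hle : (h + 2 * t) * (t * W - ∑ i, Ls i) ≤ 0 := by
      have h1 : t * W - ∑ i, Ls i ≤ 0 := by linarith
      have h2 : 0 < h + 2 * t := by linarith
      nlinarith
    have hzero : ∑ i, (2 * lam i * Ls i - t) ^ 2 / (2 * lam i) = 0 := by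
      linarith [hkey]
    have heach : ∀ i ∈ Finset.univ, (2 * lam i * Ls i - t) ^ 2 / (2 * lam i) = 0 := by
      rw [← Finset.sum_eq_zero_iff_of_nonneg]
      · exact hzero
      · intro i _
        have := hlam i
        positivity
    have hri : ∀ i, r i = t := by
      intro i
      have := heach i (Finset.mem_univ i)
      have hl : (0:ℝ) < 2 * lam i := by linarith [hlam i]
      field_simp at this
      have h0 : (2 * lam i * Ls i - t) ^ 2 = 0 := by
        rw [div_eq_iff (hlam i).ne'] at this; linarith
      have h0' : 2 * lam i * Ls i - t = 0 := pow_eq_zero_iff (two_ne_zero) |>.mp h0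
      rw [hr i]; linarith
    intro i j
    rw [hri i, hri j]
  · -- all r equal → min
    intro Hr y hy0 hyc
    set c : ℝ := r 0 with hcdef
    have hc0 : 0 ≤ c := by
      rw [hcdef, hr 0]
      have := hlam 0
      have := hLs 0
      positivity
    have hLi : ∀ i, Ls i = c * (1 / (2 * lam i)) := by
      intro i
      have h1 : r i = c := Hr i 0
      rw [hr i] at h1
      have hl := (hlam i).ne'
      field_simp
      linarith
    have hLP : ∑ i, Ls i = c * W := by
      rw [hWdef, Finset.mul_sum]
      exact Finset.sum_congr rfl fun i _ => hLi i
    have hLQ : ∑ i, lam i * Ls i ^ 2 = c ^ 2 / 2 * W := by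
      rw [hWdef, Finset.mul_sum]
      apply Finset.sum_congr rfl
      intro i _
      have hl := (hlam i).ne'
      rw [hLi i]
      field_simp
    -- c = t
    have hceq : c = t := by
      rw [hLP, hLQ] at hcon
      have h1 : (c - t) * (c + t + h) = 0 := by
        have hWne := hW.ne'
        have : W * (c ^ 2 + h * c) = S := by linarith [hcon]
        have h2 : W * (c ^ 2 + h * c) = W * (t ^ 2 + h * t) := by rw [this, htS]
        have h3 : c ^ 2 + h * c = t ^ 2 + h * t := by
          exact mul_left_cancel₀ hWne h2
        linear_combination h3
      rcases mul_eq_zero.mp h1 with h2 | h2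
      · linarith
      · linarith
    -- y satisfies ∑ y ≤ t * W
    have hkey := key y hyc
    have hnn : 0 ≤ ∑ i, (2 * lam i * y i - t) ^ 2 / (2 * lam i) := by
      apply Finset.sum_nonneg
      intro i _
      have := hlam i
      positivity
    have hyP : ∑ i, y i ≤ t * W := by
      have h2 : 0 < h + 2 * t := by linarith
      have h4 : 0 ≤ (h + 2 * t) * (t * W - ∑ i, y i) := by rw [hkey]; exact hnn
      by_contra hcontra
      push_neg at hcontra
      have h5 : t * W - ∑ i, y i < 0 := by linarith
      nlinarith [mul_neg_of_pos_of_neg h2 h5]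
    have hLsP : ∑ i, Ls i = t * W := by rw [hLP, hceq]
    -- conclude
    have hmul : h * ∑ i, y i ≤ h * (t * W) := mul_le_mul_of_nonneg_left hyP hh.le
    rw [hLsP] at hcon
    linarith [hcon, hyc]
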